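/- arXiv:1002.2854 — 7 statements merged into one kernel-verified Lean document; each statement's English description precedes it below -/
import Mathlib

section
/- If α, β ∈ ℤ[ω] (where ω = e^{2πi/3}) satisfy α ≡ 1 mod 2 and β ≡ 0 mod 2, then there exists a 2×2 matrix A with entries in ℤ[ω], A ≡ I₂ mod 2, det A a unit, such that A·(α,β)ᵗ = (δ,0)ᵗ for some δ ∈ ℤ[ω]. -/
open Complex Matrix

/-- A primitive cube root of unity. -/
noncomputable def ω : ℂ := Complex.exp (2 * Real.pi * Complex.I / 3)

/-- `z` is an Eisenstein integer, i.e. `z ∈ ℤ[ω]`. -/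
def IsEis (z : ℂ) : Prop := ∃ a b : ℤ, z = (a : ℂ) + (b : ℂ) * ω




lemma omega_eq : ω = Complex.exp ((((2 * Real.pi / 3 : ℝ)) : ℂ) * Complex.I) := by
  rw [ω]; push_cast; ring_nf

lemma omega_re : ω.re = -(1/2) := by
  rw [omega_eq, Complex.exp_mul_I, ← Complex.ofReal_cos, ← Complex.ofReal_sin]
  simp only [Complex.add_re, Complex.ofReal_re, Complex.mul_re, Complex.I_re, Complex.I_im,
    Complex.ofReal_im]
  have : (2 * Real.pi / 3) = Real.pi - Real.pi / 3 := by ring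
  rw [this, Real.cos_pi_sub, Real.cos_pi_div_three]
  ring

lemma omega_im : ω.im = Real.sqrt 3 / 2 := by
  rw [omega_eq, Complex.exp_mul_I, ← Complex.ofReal_cos, ← Complex.ofReal_sin]
  simp only [Complex.add_im, Complex.ofReal_im, Complex.mul_im, Complex.I_re, Complex.I_im,
    Complex.ofReal_re]
  have : (2 * Real.pi / 3) = Real.pi - Real.pi / 3 := by ring
  rw [this, Real.sin_pi_sub, Real.sin_pi_div_three]
  ring

lemma omega_cube : ω ^ 3 = 1 := by
  rw [ω, ← Complex.exp_nat_mul]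
  have : (3 : ℕ) * (2 * (Real.pi : ℂ) * Complex.I / 3) = 2 * Real.pi * Complex.I := by
    push_cast; ring
  rw [this, Complex.exp_two_pi_mul_I]

lemma omega_ne_one : ω ≠ 1 := by
  intro h
  have h2 := omega_im
  rw [h] at h2
  simp at h2
  have : Real.sqrt 3 > 0 := Real.sqrt_pos.mpr (by norm_num)
  linarith [h2.symm]

lemma omega_quad : ω ^ 2 + ω + 1 = 0 := by
  have h : (ω - 1) * (ω ^ 2 + ω + 1) = 0 := by linear_combination omega_cube
  rcases mul_eq_zero.mp h with h' | h'
  · exact absurd (sub_eq_zero.mp h') omega_ne_one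
  · exact h'

lemma sqrt3_sq : Real.sqrt 3 * Real.sqrt 3 = 3 := Real.mul_self_sqrt (by norm_num)

lemma omega_conj : (starRingEnd ℂ) ω = ω ^ 2 := by
  apply Complex.ext
  · rw [Complex.conj_re, sq, Complex.mul_re, omega_re, omega_im]
    nlinarith [sqrt3_sq]
  · rw [Complex.conj_im, sq, Complex.mul_im, omega_re, omega_im]
    ring

lemma realNormSq (s t : ℝ) : Complex.normSq ((s : ℂ) + (t : ℂ) * ω) = s^2 - s*t + t^2 := by
  have h := Complex.mul_conj ((s : ℂ) + (t : ℂ) * ω)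
  have hc : (starRingEnd ℂ) ((s : ℂ) + (t : ℂ) * ω) = (s : ℂ) + (t : ℂ) * ω ^ 2 := by
    simp [map_add, _root_.map_mul, omega_conj, Complex.conj_ofReal]
  rw [hc] at h
  have h2 : ((s : ℂ) + (t : ℂ) * ω) * ((s : ℂ) + (t : ℂ) * ω ^ 2)
      = ((s^2 - s*t + t^2 : ℝ) : ℂ) := by
    push_cast
    linear_combination ((s:ℂ)*t + (t:ℂ)^2*(ω-1)) * omega_quad
  rw [h2] at h
  exact_mod_cast h.symm

lemma IsEis.add {x y : ℂ} (hx : IsEis x) (hy : IsEis y) : IsEis (x + y) := by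
  obtain ⟨a, b, rfl⟩ := hx; obtain ⟨c, d, rfl⟩ := hy
  exact ⟨a + c, b + d, by push_cast; ring⟩

lemma IsEis.neg {x : ℂ} (hx : IsEis x) : IsEis (-x) := by
  obtain ⟨a, b, rfl⟩ := hx
  exact ⟨-a, -b, by push_cast; ring⟩

lemma IsEis.sub {x y : ℂ} (hx : IsEis x) (hy : IsEis y) : IsEis (x - y) := by
  rw [sub_eq_add_neg]; exact hx.add hy.neg

lemma IsEis.mul {x y : ℂ} (hx : IsEis x) (hy : IsEis y) : IsEis (x * y) := by
  obtain ⟨a, b, rfl⟩ := hx; obtain ⟨c, d, rfl⟩ := hy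
  refine ⟨a*c - b*d, a*d + b*c - b*d, ?_⟩
  push_cast
  linear_combination ((b:ℂ)*(d:ℂ)) * omega_quad

lemma isEis_intCast (n : ℤ) : IsEis (n : ℂ) := ⟨n, 0, by push_cast; ring⟩
lemma isEis_one : IsEis 1 := by exact_mod_cast isEis_intCast 1
lemma isEis_zero : IsEis 0 := by exact_mod_cast isEis_intCast 0
lemma isEis_omega : IsEis ω := ⟨0, 1, by push_cast; ring⟩

lemma two_mul_ne_one {c : ℂ} (hc : IsEis c) : (2 : ℂ) * c ≠ 1 := by
  obtain ⟨e, f, rfl⟩ := hc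
  intro h
  have him := congrArg Complex.im h
  simp only [Complex.mul_im, Complex.add_im, Complex.add_re, Complex.mul_re,
    Complex.intCast_im, Complex.intCast_re, Complex.re_ofNat, Complex.im_ofNat,
    Complex.one_im, omega_im] at him
  have h3 : Real.sqrt 3 > 0 := Real.sqrt_pos.mpr (by norm_num)
  have hf : (f : ℝ) = 0 := by nlinarith [him]
  have hf0 : f = 0 := by exact_mod_cast hf
  subst hf0
  have hre := congrArg Complex.re h
  simp at hre
  have : (2 : ℝ) * (e : ℝ) = 1 := by
    simpa using hre
  have : (2 * e : ℤ) = 1 := by exact_mod_cast this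
  omega

lemma eis_natNorm {z : ℂ} (hz : IsEis z) : ∃ n : ℕ, Complex.normSq z = n := by
  obtain ⟨a, b, rfl⟩ := hz
  have h : Complex.normSq ((a : ℂ) + (b : ℂ) * ω) = ((a:ℝ))^2 - (a:ℝ)*(b:ℝ) + (b:ℝ)^2 := by
    have := realNormSq (a : ℝ) (b : ℝ)
    push_cast at this ⊢
    exact this
  refine ⟨(a^2 - a*b + b^2).toNat, ?_⟩
  have hnn : (0:ℤ) ≤ a^2 - a*b + b^2 := by nlinarith [sq_nonneg (2*a - b), sq_nonneg b]
  rw [h]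
  have h4 : ((a^2 - a*b + b^2).toNat : ℤ) = a^2 - a*b + b^2 := Int.toNat_of_nonneg hnn
  have h5 : (((a^2 - a*b + b^2).toNat : ℕ) : ℝ) = ((a^2 - a*b + b^2 : ℤ) : ℝ) := by
    exact_mod_cast congrArg (fun x : ℤ => (x : ℝ)) h4
  rw [h5]; push_cast; ring

lemma near (u N : ℤ) (hN : 0 < N) : ∃ k : ℤ, |(u : ℝ) - (N : ℝ) * k| ≤ (N : ℝ) / 2 := by
  refine ⟨round ((u : ℝ) / (N : ℝ)), ?_⟩
  have hN' : (0:ℝ) < (N:ℝ) := by exact_mod_cast hN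
  have h := abs_sub_round ((u : ℝ) / (N : ℝ))
  have heq : (u : ℝ) - (N:ℝ) * round ((u : ℝ) / (N : ℝ))
      = (N:ℝ) * ((u : ℝ) / (N : ℝ) - round ((u : ℝ) / (N : ℝ))) := by
    field_simp
  rw [heq, abs_mul, abs_of_pos hN']
  calc (N:ℝ) * |(u : ℝ) / (N : ℝ) - round ((u : ℝ) / (N : ℝ))|
      ≤ (N:ℝ) * (1/2) := by nlinarith [h]
    _ = (N:ℝ)/2 := by ring

lemma eis_div (a b : ℂ) (ha : IsEis a) (hb : IsEis b) (hb0 : b ≠ 0) :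
    ∃ q : ℂ, IsEis q ∧ Complex.normSq (a - q * b) < Complex.normSq b := by
  obtain ⟨e, f, hae⟩ := ha
  obtain ⟨c, d, hbe⟩ := hb
  set N : ℤ := c^2 - c*d + d^2 with hNdef
  have hbN : Complex.normSq b = (N : ℝ) := by
    rw [hbe, hNdef]
    have := realNormSq (c : ℝ) (d : ℝ)
    push_cast
    exact this
  have hNpos : 0 < N := by
    rcases lt_or_eq_of_le (Complex.normSq_nonneg b) with h | h
    · rw [hbN] at h; exact_mod_cast h
    · exact absurd (Complex.normSq_eq_zero.mp h.symm) hb0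
  set u : ℤ := e*c - e*d + f*d with hudef
  set v : ℤ := f*c - e*d with hvdef
  obtain ⟨q1, hq1⟩ := near u N hNpos
  obtain ⟨q2, hq2⟩ := near v N hNpos
  refine ⟨(q1 : ℂ) + (q2 : ℂ) * ω, ⟨q1, q2, rfl⟩, ?_⟩
  -- key complex identity
  have hconj : (starRingEnd ℂ) b = (c : ℂ) + (d : ℂ) * ω ^ 2 := by
    rw [hbe]; simp [map_add, _root_.map_mul, omega_conj, Complex.conj_ofReal]
  have h1 : a * (starRingEnd ℂ) b = ((u : ℂ)) + (v : ℂ) * ω := by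
    rw [hae, hconj, hudef, hvdef]
    push_cast
    linear_combination ((e:ℂ)*(d:ℂ) + (f:ℂ)*(d:ℂ)*(ω - 1)) * omega_quad
  have h2 : b * (starRingEnd ℂ) b = (N : ℂ) := by
    have := Complex.mul_conj b
    rw [this, hbN]
    norm_cast
  have key : (N : ℂ) * (a - ((q1 : ℂ) + (q2 : ℂ) * ω) * b)
      = b * (((u - N*q1 : ℤ) : ℂ) + ((v - N*q2 : ℤ) : ℂ) * ω) := by
    push_cast
    linear_combination b * h1 - a * h2
  have hns := congrArg Complex.normSq key
  rw [Complex.normSq_mul, Complex.normSq_mul] at hns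
  have hNsq : Complex.normSq ((N:ℤ) : ℂ) = (N:ℝ)^2 := by
    rw [show (((N:ℤ)) : ℂ) = (((N:ℝ)):ℂ) by push_cast; ring, Complex.normSq_ofReal]
    ring
  have hST : Complex.normSq (((u - N*q1 : ℤ) : ℂ) + ((v - N*q2 : ℤ) : ℂ) * ω)
      = ((u:ℝ) - N*q1)^2 - ((u:ℝ) - N*q1)*((v:ℝ) - N*q2) + ((v:ℝ) - N*q2)^2 := by
    have := realNormSq ((u:ℝ) - N*q1) ((v:ℝ) - N*q2)
    push_cast at this ⊢
    exact this
  rw [hNsq, hST, hbN] at hns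
  set S : ℝ := (u:ℝ) - N*q1
  set T : ℝ := (v:ℝ) - N*q2
  have hNr : (0:ℝ) < (N:ℝ) := by exact_mod_cast hNpos
  have hS := abs_le.mp hq1
  have hT := abs_le.mp hq2
  have h34 : S^2 - S*T + T^2 ≤ 3/4 * (N:ℝ)^2 := by
    nlinarith [hS.1, hS.2, hT.1, hT.2, sq_nonneg (S - T), sq_nonneg (S + T)]
  rw [hbN]
  set X : ℝ := Complex.normSq (a - ((q1 : ℂ) + (q2 : ℂ) * ω) * b) with hXdef
  by_contra hcon
  push_neg at hcon
  have step1 : (N:ℝ)*(S^2-S*T+T^2) ≤ (N:ℝ)*(3/4*(N:ℝ)^2) :=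
    mul_le_mul_of_nonneg_left h34 hNr.le
  have step2 : (N:ℝ)^2 * (N:ℝ) ≤ (N:ℝ)^2 * X :=
    mul_le_mul_of_nonneg_left hcon (sq_nonneg _)
  have step3 : (N:ℝ)^2*(N:ℝ) ≤ (N:ℝ)*(3/4*(N:ℝ)^2) := le_trans (step2.trans_eq hns) step1
  nlinarith [step3, mul_pos (mul_pos hNr hNr) hNr]

lemma bezout : ∀ n : ℕ, ∀ a b : ℂ, IsEis a → IsEis b → Complex.normSq b < n →
    ∃ g x y : ℂ, IsEis g ∧ IsEis x ∧ IsEis y ∧ x*a + y*b = g ∧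
      (∃ p, IsEis p ∧ a = g * p) ∧ (∃ p, IsEis p ∧ b = g * p) := by
  intro n
  induction n with
  | zero =>
    intro a b _ _ h
    rw [Nat.cast_zero] at h
    exact absurd h (Complex.normSq_nonneg b).not_gt
  | succ n ih =>
    intro a b ha hb hn
    by_cases hb0 : b = 0
    · exact ⟨a, 1, 0, ha, isEis_one, isEis_zero, by rw [hb0]; ring,
        ⟨1, isEis_one, by ring⟩, ⟨0, isEis_zero, by rw [hb0]; ring⟩⟩
    · obtain ⟨q, hqE, hqlt⟩ := eis_div a b ha hb hb0
      have hrE : IsEis (a - q*b) := ha.sub (hqE.mul hb)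
      obtain ⟨m, hm⟩ := eis_natNorm hb
      have hmn : (m:ℝ) < n + 1 := by rw [← hm]; exact_mod_cast hn
      have hmn' : m ≤ n := by exact_mod_cast Nat.lt_succ_iff.mp (by exact_mod_cast hmn)
      have hr : Complex.normSq (a - q*b) < n := by
        calc Complex.normSq (a - q*b) < Complex.normSq b := hqlt
          _ = (m:ℝ) := hm
          _ ≤ (n:ℝ) := by exact_mod_cast hmn'
      obtain ⟨g, x, y, hgE, hxE, hyE, hxy, ⟨p, hpE, hp⟩, ⟨p', hp'E, hp'⟩⟩ :=
        ih b (a - q*b) hb hrE hr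
      refine ⟨g, y, x - y*q, hgE, hyE, hxE.sub (hyE.mul hqE), by linear_combination hxy,
        ⟨q*p + p', (hqE.mul hpE).add hp'E, by linear_combination q * hp + hp'⟩,
        ⟨p, hpE, hp⟩⟩

lemma unit_choice {g α c p : ℂ} (hg : IsEis g) (hc : IsEis c) (hpE : IsEis p)
    (hαp : α = g * p) (hα1 : α - 1 = 2 * c) :
    ∃ v w : ℂ, IsEis v ∧ IsEis w ∧ v * w = 1 ∧ ∃ d, IsEis d ∧ v * g - 1 = 2 * d := by
  obtain ⟨P, Q, rfl⟩ := hg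
  rcases Int.even_or_odd P with ⟨k, hk⟩ | ⟨k, hk⟩
  · rcases Int.even_or_odd Q with ⟨l, hl⟩ | ⟨l, hl⟩
    · -- P even, Q even: contradiction
      exfalso
      subst hk hl
      apply two_mul_ne_one (hc := (((isEis_intCast k).add ((isEis_intCast l).mul isEis_omega)).mul hpE).sub hc)
      push_cast at hαp
      linear_combination hα1 - hαp
    · -- P even, Q odd : v = -1 - ω
      subst hk hl
      refine ⟨-1 - ω, ω, ⟨-1, -1, by push_cast; ring⟩, isEis_omega, ?_,
        ((l - k : ℤ) : ℂ) + ((-k : ℤ) : ℂ) * ω,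
        ⟨l - k, -k, rfl⟩, ?_⟩
      · linear_combination (-1 : ℂ) * omega_quad
      · push_cast
        linear_combination (-(2*(l:ℂ)+1)) * omega_quad
  · rcases Int.even_or_odd Q with ⟨l, hl⟩ | ⟨l, hl⟩
    · -- P odd, Q even : v = 1
      subst hk hl
      refine ⟨1, 1, isEis_one, isEis_one, one_mul 1,
        ((k : ℤ) : ℂ) + ((l : ℤ) : ℂ) * ω, ⟨k, l, rfl⟩, ?_⟩
      push_cast
      ring
    · -- P odd, Q odd : v = ω
      subst hk hl
      refine ⟨ω, -1 - ω, isEis_omega, ⟨-1, -1, by push_cast; ring⟩, ?_,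
        ((-l - 1 : ℤ) : ℂ) + ((k - l : ℤ) : ℂ) * ω, ⟨-l - 1, k - l, rfl⟩, ?_⟩
      · linear_combination (-1 : ℂ) * omega_quad
      · push_cast
        linear_combination ((2*(l:ℂ)+1)) * omega_quad

theorem stmt0 (α β : ℂ) (hα : IsEis α) (hβ : IsEis β)
    (hα2 : ∃ c : ℂ, IsEis c ∧ α - 1 = 2 * c)
    (hβ2 : ∃ c : ℂ, IsEis c ∧ β = 2 * c) :
    ∃ A : Matrix (Fin 2) (Fin 2) ℂ,
      (∀ i j, IsEis (A i j)) ∧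
      (∀ i j, ∃ c : ℂ, IsEis c ∧ A i j - (1 : Matrix (Fin 2) (Fin 2) ℂ) i j = 2 * c) ∧
      (∃ u : ℂ, IsEis u ∧ A.det * u = 1) ∧
      (∃ δ : ℂ, IsEis δ ∧ A.mulVec ![α, β] = ![δ, 0]) := by
  obtain ⟨cα, hcαE, hcα⟩ := hα2
  obtain ⟨cβ, hcβE, hcβ⟩ := hβ2
  obtain ⟨m, hm⟩ := eis_natNorm hβ
  obtain ⟨g, x, y, hgE, hxE, hyE, hxy, ⟨p, hpE, hp⟩, ⟨p', hp'E, hp'⟩⟩ :=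
    bezout (m + 1) α β hα hβ (by rw [hm]; exact_mod_cast Nat.lt_succ_self m)
  obtain ⟨v, w, hvE, hwE, hvw, cg, hcgE, hcg⟩ := unit_choice hgE hcαE hpE hp hcα
  -- G = v*g ≡ 1 mod 2, G ≠ 0
  set G : ℂ := v * g with hGdef
  have hGE : IsEis G := hvE.mul hgE
  have hG1 : G - 1 = 2 * cg := hcg
  -- α = G * (w*p), β = G * (w*p')
  have hαG : α = G * (w * p) := by
    rw [hGdef, hp]; linear_combination (-(g*p)) * hvw
  have hβG : β = G * (w * p') := by
    rw [hGdef, hp']; linear_combination (-(g*p')) * hvw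
  have hGne : G ≠ 0 := by
    intro h0
    apply two_mul_ne_one hcgE.neg
    rw [h0] at hG1
    linear_combination hG1
  set α' : ℂ := w * p with hα'def
  set β' : ℂ := w * p' with hβ'def
  have hα'E : IsEis α' := hwE.mul hpE
  have hβ'E : IsEis β' := hwE.mul hp'E
  -- congruences
  have hα'1 : α' - 1 = 2 * (cα - cg * α') := by
    have : G * α' - 1 = 2 * cα := by rw [← hαG]; exact hcα
    linear_combination this - α' * hG1
  have hβ'0 : β' = 2 * (cβ - cg * β') := by
    have : G * β' = 2 * cβ := by rw [← hβG]; exact hcβ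
    linear_combination this - β' * hG1
  -- Bezout for G
  set X : ℂ := v * x with hXdef
  set Y : ℂ := v * y with hYdef
  have hXE : IsEis X := hvE.mul hxE
  have hYE : IsEis Y := hvE.mul hyE
  have hXY : X * α + Y * β = G := by
    rw [hXdef, hYdef, hGdef]; linear_combination v * hxy
  -- adjust
  set X' : ℂ := X + Y * β with hX'def
  set Y' : ℂ := Y * (1 - α) with hY'def
  have hX'E : IsEis X' := hXE.add (hYE.mul hβ)
  have hY'E : IsEis Y' := hYE.mul (isEis_one.sub hα)
  have hXY' : X' * α + Y' * β = G := by
    rw [hX'def, hY'def]; linear_combination hXY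
  have hX'1 : X' - 1 = 2 * (cg - X * cα) := by
    rw [hX'def]
    linear_combination hG1 + hXY - X * hcα
  have hY'0 : Y' = 2 * (-(Y * cα)) := by
    rw [hY'def]
    linear_combination (-Y) * hcα
  -- the matrix
  refine ⟨!![X', Y'; -β', α'], ?_, ?_, ?_, ?_⟩
  · intro i j
    fin_cases i <;> fin_cases j <;>
      simp [hX'E, hY'E, hβ'E.neg, hα'E]
  · intro i j
    fin_cases i <;> fin_cases j <;> simp [Matrix.one_apply]
    · exact ⟨cg - X * cα, hcgE.sub (hXE.mul hcαE), hX'1⟩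
    · exact ⟨-(Y * cα), (hYE.mul hcαE).neg, hY'0⟩
    · refine ⟨-(cβ - cg * β'), (hcβE.sub (hcgE.mul hβ'E)).neg, ?_⟩
      linear_combination -hβ'0
    · exact ⟨cα - cg * α', hcαE.sub (hcgE.mul hα'E), hα'1⟩
  · refine ⟨1, isEis_one, ?_⟩
    rw [Matrix.det_fin_two_of, mul_one]
    have hdet : G * (X' * α' - Y' * -β') = G * 1 := by
      linear_combination hXY' - X' * hαG - Y' * hβG
    exact mul_left_cancel₀ hGne hdet
  · refine ⟨G, hGE, ?_⟩
    funext i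
    fin_cases i <;>
      simp [Matrix.mulVec, dotProduct, Fin.sum_univ_two]
    · exact hXY'
    · linear_combination (-β') * hαG + α' * hβG
end

section
/- Let α, β be complex numbers with √3·|β| ≤ |α|, β ≠ 0, and suppose the argument of ᾱβ lies in [-π/6, π/6]. Then |α - 2β|² < |α|². -/
open Complex

theorem stmt4 (α β : ℂ) (hβ : β ≠ 0)
    (h1 : Real.sqrt 3 * ‖β‖ ≤ ‖α‖)
    (h2 : ((starRingEnd ℂ) α * β).arg ∈ Set.Icc (-(Real.pi / 6)) (Real.pi / 6)) :
    ‖α - 2 * β‖ ^ 2 < ‖α‖ ^ 2 := by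
  have hb : 0 < ‖β‖ := norm_pos_iff.mpr hβ
  set z := (starRingEnd ℂ) α * β with hz
  have hzne : z ≠ 0 := by
    apply mul_ne_zero _ hβ
    intro h
    have : α = 0 := by simpa using congrArg (starRingEnd ℂ) h
    rw [this] at h1
    simp at h1
    have h3 : (0:ℝ) < Real.sqrt 3 := Real.sqrt_pos.mpr (by norm_num)
    nlinarith
  have habs : ‖z‖ = ‖α‖ * ‖β‖ := by
    simp [hz, map_mul]
  have hpi := Real.pi_pos
  have hcos : Real.sqrt 3 / 2 ≤ Real.cos z.arg := by
    rw [← Real.cos_pi_div_six]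
    rcases le_or_gt 0 z.arg with h | h
    · exact Real.cos_le_cos_of_nonneg_of_le_pi h (by linarith) h2.2
    · rw [← Real.cos_neg z.arg]
      exact Real.cos_le_cos_of_nonneg_of_le_pi (by linarith) (by linarith)
        (by linarith [h2.1])
  have hcosarg := Complex.cos_arg hzne
  have hre : ‖z‖ * Real.cos z.arg = z.re := by
    rw [hcosarg]
    field_simp
  have hsqrt3 : Real.sqrt 3 * Real.sqrt 3 = 3 := Real.mul_self_sqrt (by norm_num)
  have hkey : ‖β‖ ^ 2 < z.re := by
    have h3 : Real.sqrt 3 * ‖β‖ * (Real.sqrt 3 * ‖β‖ / 2)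
        ≤ ‖α‖ * (‖β‖ * Real.cos z.arg) := by
      have hc2 : Real.sqrt 3 * ‖β‖ / 2 ≤ ‖β‖ * Real.cos z.arg := by
        nlinarith
      have hnn : 0 ≤ Real.sqrt 3 * ‖β‖ := by positivity
      have h1' : 0 ≤ Real.sqrt 3 * ‖β‖ / 2 := by positivity
      exact mul_le_mul h1 hc2 h1' (norm_nonneg α)
    have : ‖z‖ * Real.cos z.arg ≥ 3 / 2 * ‖β‖ ^ 2 := by
      rw [habs]
      nlinarith
    nlinarith
  have hzre : z.re = α.re * β.re + α.im * β.im := by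
    simp [hz, Complex.mul_re]
  have habsb : ‖β‖ ^ 2 = β.re ^ 2 + β.im ^ 2 := by
    rw [Complex.sq_norm, Complex.normSq_apply]; ring
  rw [Complex.sq_norm, Complex.sq_norm, Complex.normSq_apply, Complex.normSq_apply]
  simp only [Complex.sub_re, Complex.sub_im, Complex.mul_re, Complex.mul_im,
    Complex.re_ofNat, Complex.im_ofNat]
  rw [hzre, habsb] at hkey
  nlinarith
end

section
/- The group GL₂(𝔽₄) modulo its center 𝔽₄ˣ is isomorphic to the alternating group A₅. -/
open Matrix Projectivization
open scoped LinearAlgebra.Projectivization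

namespace Stmt5Aux

noncomputable section

/-- `Equiv.permCongr` as a `MulEquiv`. -/
def permCongrHom {α β : Type*} (e : α ≃ β) : Equiv.Perm α ≃* Equiv.Perm β :=
  { e.permCongr with
    map_mul' := fun p q => by
      ext b
      simp [Equiv.permCongr_apply] }

variable {F : Type*} [Field F]

/-- Equivalence of projectivizations induced by a linear equivalence. -/
def projMapEquiv {V W : Type*} [AddCommGroup V] [Module F V] [AddCommGroup W] [Module F W]
    (e : V ≃ₗ[F] W) : ℙ F V ≃ ℙ F W where
  toFun := Projectivization.map (e : V →ₗ[F] W) e.injective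
  invFun := Projectivization.map (e.symm : W →ₗ[F] V) e.symm.injective
  left_inv p := by
    induction p using Projectivization.ind with
    | h v hv => simp [Projectivization.map_mk]
  right_inv p := by
    induction p using Projectivization.ind with
    | h v hv => simp [Projectivization.map_mk]

lemma gl_mulVec_injective (g : GL (Fin 2) F) :
    Function.Injective (mulVecLin (g : Matrix (Fin 2) (Fin 2) F)) := by
  intro x y h
  simp only [mulVecLin_apply] at h
  have h2 : (↑(g⁻¹ * g) : Matrix (Fin 2) (Fin 2) F) *ᵥ x
      = (↑(g⁻¹ * g) : Matrix (Fin 2) (Fin 2) F) *ᵥ y := by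
    simp only [Units.val_mul, ← Matrix.mulVec_mulVec, h]
  rw [inv_mul_cancel] at h2
  simpa using h2

lemma gl_mulVec_ne_zero (g : GL (Fin 2) F) {v : Fin 2 → F} (hv : v ≠ 0) :
    (g : Matrix (Fin 2) (Fin 2) F) *ᵥ v ≠ 0 := by
  intro h
  apply hv
  apply gl_mulVec_injective g
  simp [mulVecLin_apply, h]

/-- The action of `GL₂(F)` on the projective line, as a map. -/
def glMapFun (g : GL (Fin 2) F) : ℙ F (Fin 2 → F) → ℙ F (Fin 2 → F) :=
  Projectivization.map (mulVecLin (g : Matrix (Fin 2) (Fin 2) F)) (gl_mulVec_injective g)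

lemma glMapFun_mk (g : GL (Fin 2) F) (v : Fin 2 → F) (hv : v ≠ 0) :
    glMapFun g (Projectivization.mk F v hv) =
      Projectivization.mk F ((g : Matrix (Fin 2) (Fin 2) F) *ᵥ v) (gl_mulVec_ne_zero g hv) :=
  Projectivization.map_mk _ _ v hv

lemma glMapFun_mul (g h : GL (Fin 2) F) (p : ℙ F (Fin 2 → F)) :
    glMapFun (g * h) p = glMapFun g (glMapFun h p) := by
  induction p using Projectivization.ind with
  | h v hv => simp only [glMapFun_mk, Units.val_mul, Matrix.mulVec_mulVec]

lemma glMapFun_one (p : ℙ F (Fin 2 → F)) : glMapFun (1 : GL (Fin 2) F) p = p := by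
  induction p using Projectivization.ind with
  | h v hv => simp [glMapFun_mk]

/-- The action of `GL₂(F)` on the projective line, as a homomorphism to permutations. -/
def glPerm : GL (Fin 2) F →* Equiv.Perm (ℙ F (Fin 2 → F)) where
  toFun g :=
    { toFun := glMapFun g
      invFun := glMapFun g⁻¹
      left_inv := fun p => by rw [← glMapFun_mul]; simp [glMapFun_one]
      right_inv := fun p => by rw [← glMapFun_mul]; simp [glMapFun_one] }
  map_one' := by
    ext p
    simp [glMapFun_one]
  map_mul' g h := by
    ext p
    simp [glMapFun_mul]

lemma glPerm_apply (g : GL (Fin 2) F) (p : ℙ F (Fin 2 → F)) : glPerm g p = glMapFun g p := rfl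

/-- Scalar matrices act trivially on the projective line. -/
lemma glPerm_eq_one_of_scalar (g : GL (Fin 2) F) (a : F)
    (hg : (g : Matrix (Fin 2) (Fin 2) F) = a • 1) : glPerm g = 1 := by
  ext p
  induction p using Projectivization.ind with
  | h v hv =>
    have h1 : (g : Matrix (Fin 2) (Fin 2) F) *ᵥ v = a • v := by
      rw [hg, Matrix.smul_mulVec, Matrix.one_mulVec]
    simp only [glPerm_apply, glMapFun_mk, Equiv.Perm.coe_one, id_eq]
    rw [Projectivization.mk_eq_mk_iff']
    exact ⟨a, by rw [h1]⟩

/-- A matrix in `GL₂` fixing all points of the projective line is scalar. -/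
lemma scalar_of_glPerm_eq_one (g : GL (Fin 2) F) (hg : glPerm g = 1) :
    ∃ a : F, a ≠ 0 ∧ (g : Matrix (Fin 2) (Fin 2) F) = a • 1 := by
  set M : Matrix (Fin 2) (Fin 2) F := (g : Matrix (Fin 2) (Fin 2) F) with hM
  have key : ∀ (v : Fin 2 → F) (hv : v ≠ 0), ∃ a : F, a • v = M *ᵥ v := by
    intro v hv
    have := congrFun (congrArg (fun (e : Equiv.Perm (ℙ F (Fin 2 → F))) => (e : ℙ F (Fin 2 → F) → ℙ F (Fin 2 → F))) hg) (Projectivization.mk F v hv)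
    simp only [glPerm_apply, glMapFun_mk, Equiv.Perm.coe_one, id_eq] at this
    rw [Projectivization.mk_eq_mk_iff'] at this
    exact this
  have h0 : (Pi.single (0 : Fin 2) (1 : F) : Fin 2 → F) ≠ 0 := by
    intro h; simpa using congrFun h 0
  have h1 : (Pi.single (1 : Fin 2) (1 : F) : Fin 2 → F) ≠ 0 := by
    intro h; simpa using congrFun h 1
  have h01 : (Pi.single (0 : Fin 2) (1 : F) + Pi.single (1 : Fin 2) (1 : F) : Fin 2 → F) ≠ 0 := by
    intro h; simpa using congrFun h 0
  obtain ⟨a, ha⟩ := key _ h0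
  obtain ⟨b, hb⟩ := key _ h1
  obtain ⟨c, hc⟩ := key _ h01
  have ea00 : a = M 0 0 := by simpa [Matrix.mulVec_single] using congrFun ha 0
  have ea10 : (0 : F) = M 1 0 := by simpa [Matrix.mulVec_single] using congrFun ha 1
  have eb01 : (0 : F) = M 0 1 := by simpa [Matrix.mulVec_single] using congrFun hb 0
  have eb11 : b = M 1 1 := by simpa [Matrix.mulVec_single] using congrFun hb 1
  have hMv : M *ᵥ (Pi.single (0 : Fin 2) (1 : F) + Pi.single (1 : Fin 2) (1 : F)) =
      (M *ᵥ Pi.single (0 : Fin 2) (1 : F)) + (M *ᵥ Pi.single (1 : Fin 2) (1 : F)) :=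
    Matrix.mulVec_add _ _ _
  have ec0 : c = M 0 0 + M 0 1 := by
    have := congrFun (hc.trans hMv) 0
    simpa [Matrix.mulVec_single] using this
  have ec1 : c = M 1 0 + M 1 1 := by
    have := congrFun (hc.trans hMv) 1
    simpa [Matrix.mulVec_single] using this
  have hab : a = b := by
    rw [ea00, eb11]
    have := ec0.symm.trans ec1
    rw [← ea10, ← eb01] at this
    simpa using this
  refine ⟨a, ?_, ?_⟩
  · rintro rfl
    apply gl_mulVec_ne_zero g h0
    rw [← hM, ← ha, zero_smul]
  · ext i j
    fin_cases i <;> fin_cases j <;>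
      simp [Matrix.one_apply, ← ea00, ← ea10, ← eb01, hab ▸ eb11.symm]

lemma transvection_sq_zero {i j : Fin 2} (h : i ≠ j) :
    (Matrix.single i j (1 : F)) * (Matrix.single i j (1 : F)) = 0 :=
  by
    rw [Matrix.single_mul_single_of_ne]
    exact Ne.symm h

/-- The transvection `1 + E i j` as a unit. -/
def transvectionUnit {i j : Fin 2} (h : i ≠ j) : GL (Fin 2) F where
  val := 1 + Matrix.single i j (1 : F)
  inv := 1 - Matrix.single i j (1 : F)
  val_inv := by
    have h2 := transvection_sq_zero (F := F) h
    rw [mul_sub, mul_one, add_mul, one_mul, h2, add_zero, add_sub_cancel_right]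
  inv_val := by
    have h2 := transvection_sq_zero (F := F) h
    rw [sub_mul, one_mul, mul_add, mul_one, h2, add_zero, add_sub_cancel_right]

/-- Central elements of `GL₂` are scalar matrices. -/
lemma scalar_of_mem_center (g : GL (Fin 2) F)
    (hg : g ∈ Subgroup.center (GL (Fin 2) F)) :
    ∃ a : F, a ≠ 0 ∧ (g : Matrix (Fin 2) (Fin 2) F) = a • 1 := by
  rw [Subgroup.mem_center_iff] at hg
  have hcomm : Pairwise fun i j : Fin 2 =>
      Commute (Matrix.single i j (1 : F)) (g : Matrix (Fin 2) (Fin 2) F) := by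
    intro i j hij
    have := hg (transvectionUnit hij)
    have hmat := congrArg (fun u : GL (Fin 2) F => (u : Matrix (Fin 2) (Fin 2) F)) this
    simp only [Units.val_mul] at hmat
    have : (transvectionUnit (F := F) hij : Matrix (Fin 2) (Fin 2) F) = 1 + Matrix.single i j 1 := rfl
    rw [this] at hmat
    have h2 : (1 + Matrix.single i j 1) * (g : Matrix (Fin 2) (Fin 2) F) =
        (g : Matrix (Fin 2) (Fin 2) F) * (1 + Matrix.single i j 1) := hmat
    rw [add_mul, one_mul, mul_add, mul_one] at h2
    exact add_left_cancel h2
  obtain ⟨d, hd⟩ := Matrix.mem_range_scalar_of_commute_single hcomm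
  refine ⟨d, ?_, ?_⟩
  · rintro rfl
    have h0 : (g : Matrix (Fin 2) (Fin 2) F) = 0 := by
      rw [← hd]
      ext i j
      simp [Matrix.scalar_apply]
    have : ((g : Matrix (Fin 2) (Fin 2) F) * ((g⁻¹ : GL (Fin 2) F) : Matrix (Fin 2) (Fin 2) F)) = 1 := by
      rw [← Units.val_mul]
      simp
    rw [h0, zero_mul] at this
    have h00 := congrFun (congrFun this 0) 0
    rw [Matrix.zero_apply, Matrix.one_apply_eq] at h00
    exact zero_ne_one h00
  · rw [← hd]
    ext i j
    simp [Matrix.scalar_apply, Matrix.one_apply, Matrix.diagonal]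

/-- Scalar matrices are central. -/
lemma mem_center_of_scalar (g : GL (Fin 2) F) (a : F)
    (hg : (g : Matrix (Fin 2) (Fin 2) F) = a • 1) : g ∈ Subgroup.center (GL (Fin 2) F) := by
  rw [Subgroup.mem_center_iff]
  intro h
  apply Units.ext
  show (h : Matrix (Fin 2) (Fin 2) F) * g = (g : Matrix (Fin 2) (Fin 2) F) * h
  rw [hg, smul_mul_assoc, mul_smul_comm, one_mul, mul_one]

lemma ker_glPerm_eq_center :
    (glPerm (F := F)).ker = Subgroup.center (GL (Fin 2) F) := by
  ext g
  constructor
  · intro hg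
    obtain ⟨a, _, ha⟩ := scalar_of_glPerm_eq_one g (MonoidHom.mem_ker.mp hg)
    exact mem_center_of_scalar g a ha
  · intro hg
    obtain ⟨a, _, ha⟩ := scalar_of_mem_center g hg
    exact MonoidHom.mem_ker.mpr (glPerm_eq_one_of_scalar g a ha)

section F4

local notation "K" => GaloisField 2 2

lemma card_K : Nat.card K = 4 := by
  have := GaloisField.card 2 (p := 2) (by norm_num)
  norm_num at this
  exact this

instance finite_P : Finite (ℙ K (Fin 2 → K)) := by
  refine Finite.of_surjective
    (fun v : {v : Fin 2 → K // v ≠ 0} => Projectivization.mk K v.1 v.2) ?_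
  intro p
  induction p using Projectivization.ind with
  | h v hv => exact ⟨⟨v, hv⟩, rfl⟩

lemma card_P : Nat.card (ℙ K (Fin 2 → K)) = 5 := by
  classical
  have e1 : ℙ K (Fin 2 → K) ≃ ℙ K (K × K) := projMapEquiv (LinearEquiv.finTwoArrow K K)
  have e2 : OnePoint K ≃ ℙ K (Fin 2 → K) := OnePoint.equivProjectivization K
  rw [Nat.card_congr e2.symm]
  have h1 : Nat.card (OnePoint K) = Nat.card (Option K) := rfl
  have h2 : Nat.card (Option K) = Nat.card K + 1 := by
    simp [Nat.card_eq_fintype_card]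
  rw [h1, h2, card_K]

lemma scalar_eq_smul_one (a : K) :
    (Matrix.scalar (Fin 2)) a = a • (1 : Matrix (Fin 2) (Fin 2) K) := by
  ext i j
  by_cases h : i = j <;>
    simp [Matrix.scalar_apply, Matrix.one_apply, Matrix.diagonal_apply, h]

/-- The scalar embedding `Kˣ →* GL₂(K)`. -/
def scalarHom : Kˣ →* GL (Fin 2) K :=
  Units.map (Matrix.scalar (Fin 2) : K →+* Matrix (Fin 2) (Fin 2) K).toMonoidHom

lemma scalarHom_injective : Function.Injective (scalarHom) := by
  intro a b hab
  have := congrArg (fun u : GL (Fin 2) K => (u : Matrix (Fin 2) (Fin 2) K) 0 0) hab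
  apply Units.ext
  simpa [scalarHom, Matrix.scalar_apply] using this

lemma range_scalarHom : scalarHom.range = Subgroup.center (GL (Fin 2) K) := by
  ext g
  constructor
  · rintro ⟨a, rfl⟩
    refine mem_center_of_scalar _ (a : K) ?_
    show (Matrix.scalar (Fin 2)) (a : K) = (a : K) • 1
    exact scalar_eq_smul_one _
  · intro hg
    obtain ⟨a, ha0, ha⟩ := scalar_of_mem_center g hg
    refine ⟨Units.mk0 a ha0, ?_⟩
    apply Units.ext
    show (Matrix.scalar (Fin 2)) a = (g : Matrix (Fin 2) (Fin 2) K)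
    rw [ha]
    exact scalar_eq_smul_one _

lemma card_center : Nat.card (Subgroup.center (GL (Fin 2) K)) = 3 := by
  rw [← range_scalarHom,
    ← Nat.card_congr (MonoidHom.ofInjective scalarHom_injective).toEquiv]
  have : Nat.card Kˣ = Nat.card K - 1 := Nat.card_units K
  rw [this, card_K]

lemma card_GL : Nat.card (GL (Fin 2) K) = 180 := by
  letI : Fintype K := Fintype.ofFinite K
  have h := Matrix.card_GL_field (𝔽 := K) 2
  have hK : Fintype.card K = 4 := by
    rw [← Nat.card_eq_fintype_card]; exact card_K
  rw [h, hK, Fin.prod_univ_two]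
  norm_num

/-- The projective line over `K` put in bijection with `Fin 5`. -/
def epsilon : ℙ K (Fin 2 → K) ≃ Fin 5 := Finite.equivFinOfCardEq card_P

/-- The homomorphism `GL₂(K) →* Perm (Fin 5)`. -/
def phi : GL (Fin 2) K →* Equiv.Perm (Fin 5) :=
  (permCongrHom epsilon).toMonoidHom.comp glPerm

lemma ker_phi : phi.ker = Subgroup.center (GL (Fin 2) K) := by
  rw [← ker_glPerm_eq_center]
  ext g
  simp only [phi, MonoidHom.mem_ker, MonoidHom.comp_apply, MulEquiv.coe_toMonoidHom]
  constructor
  · intro h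
    have := congrArg (permCongrHom epsilon).symm h
    simpa using this
  · intro h
    rw [h, _root_.map_one]

lemma card_range_phi : Nat.card phi.range = 60 := by
  have e := QuotientGroup.quotientKerEquivRange phi
  rw [← Nat.card_congr e.toEquiv]
  have h1 : Nat.card (GL (Fin 2) K ⧸ phi.ker) =
      Nat.card (GL (Fin 2) K ⧸ Subgroup.center (GL (Fin 2) K)) := by rw [ker_phi]
  rw [h1]
  have h2 := (Subgroup.center (GL (Fin 2) K)).card_mul_index
  rw [card_center, card_GL] at h2
  rw [← Subgroup.index_eq_card]
  omega

lemma eq_alternating_of_card_sixty (H : Subgroup (Equiv.Perm (Fin 5)))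
    (hH : Nat.card H = 60) : H = alternatingGroup (Fin 5) := by
  have hperm : Nat.card (Equiv.Perm (Fin 5)) = 120 := by
    rw [Nat.card_eq_fintype_card, Fintype.card_perm, Fintype.card_fin]
    norm_num [Nat.factorial]
  have hidx : H.index = 2 := by
    have := H.card_mul_index
    rw [hH, hperm] at this
    omega
  have hA : alternatingGroup (Fin 5) ≤ H := by
    rw [← Equiv.Perm.closure_three_cycles_eq_alternating, Subgroup.closure_le]
    intro s hs
    have h3 : orderOf s = 3 := Equiv.Perm.IsThreeCycle.orderOf hs
    have hcube : s ^ 3 = 1 := by rw [← h3]; exact pow_orderOf_eq_one s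
    have hmem : s * s ∈ H := Subgroup.mul_self_mem_of_index_two hidx s
    have hmem2 : (s * s) * (s * s) ∈ H := mul_mem hmem hmem
    have h4 : (s * s) * (s * s) = s := by
      have h5 : (s * s) * (s * s) = s ^ 3 * s := by rw [pow_succ, pow_two, ← mul_assoc]
      rw [h5, hcube, one_mul]
    rwa [h4] at hmem2
  have hcardA : Nat.card (alternatingGroup (Fin 5)) = 60 := by
    have h2 := two_mul_card_alternatingGroup (α := Fin 5)
    have h3 : Fintype.card (Equiv.Perm (Fin 5)) = 120 := by
      rw [Fintype.card_perm, Fintype.card_fin]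
      norm_num [Nat.factorial]
    rw [Nat.card_eq_fintype_card]
    omega
  exact (Subgroup.eq_of_le_of_card_ge hA (by rw [hH, hcardA])).symm

lemma main :
    Nonempty
      ((GL (Fin 2) (GaloisField 2 2) ⧸ Subgroup.center (GL (Fin 2) (GaloisField 2 2))) ≃*
        alternatingGroup (Fin 5)) :=
  ⟨((QuotientGroup.quotientMulEquivOfEq ker_phi.symm).trans
      (QuotientGroup.quotientKerEquivRange phi)).trans
      (MulEquiv.subgroupCongr (eq_alternating_of_card_sixty _ card_range_phi))⟩

end F4

end

end Stmt5Aux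

/-- `GL₂(𝔽₄)` modulo its center (the scalar matrices, identified with `𝔽₄ˣ`)
is isomorphic to the alternating group `A₅`. -/
theorem stmt5 :
    Nonempty
      ((GL (Fin 2) (GaloisField 2 2) ⧸ Subgroup.center (GL (Fin 2) (GaloisField 2 2))) ≃*
        alternatingGroup (Fin 5)) := by
  exact Stmt5Aux.main
end

section
/- Let M = ℤ⁶ with bilinear form Q = [[0,1],[1,0]] ⊕ [[0,2],[2,0]] ⊕ [[-4,2],[2,-4]], with dual lattice M̌. The elements of order 2 in M̌/M on which the discriminant quadratic form q(x) = ᵗxQx mod 2ℤ vanishes are exactly the five classes v₁ = d₁, v₂ = d₂, v₃ = d₁+d₂+d₃+d₄, v₄ = d₁+d₂+3d₃, v₅ = d₁+d₂+3d₄, where d₁ = e₃/2, d₂ = e₄/2, d₃ = e₅/6 + e₆/3, d₄ = e₅/3 + e₆/6. -/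
open Matrix

/-- The Gram matrix of the lattice `U ⊕ U(2) ⊕ A₂(2)`. -/
def Qq : Matrix (Fin 6) (Fin 6) ℚ :=
  !![0,1,0,0,0,0; 1,0,0,0,0,0; 0,0,0,2,0,0; 0,0,2,0,0,0; 0,0,0,0,-4,2; 0,0,0,0,2,-4]

/-- The lattice `M = ℤ⁶` sitting inside `ℚ⁶`. -/
def intLat : Submodule ℤ (Fin 6 → ℚ) where
  carrier := {x | ∀ i, ∃ k : ℤ, x i = k}
  add_mem' := by
    rintro x y hx hy i
    obtain ⟨a, ha⟩ := hx i
    obtain ⟨b, hb⟩ := hy i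
    exact ⟨a + b, by simp [Pi.add_apply, ha, hb]⟩
  zero_mem' := fun i => ⟨0, by simp⟩
  smul_mem' := by
    rintro n x hx i
    obtain ⟨a, ha⟩ := hx i
    exact ⟨n * a, by rw [Pi.smul_apply, ha]; push_cast [zsmul_eq_mul]; ring⟩

/-- The dual lattice `M̌ = {x ∈ ℚ⁶ : Q(x, m) ∈ ℤ for all m ∈ M}`. -/
def dualLat : Submodule ℤ (Fin 6 → ℚ) where
  carrier := {x | ∀ m ∈ intLat, ∃ k : ℤ, x ⬝ᵥ Qq.mulVec m = k}
  add_mem' := by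
    rintro x y hx hy m hm
    obtain ⟨a, ha⟩ := hx m hm
    obtain ⟨b, hb⟩ := hy m hm
    exact ⟨a + b, by rw [add_dotProduct, ha, hb]; push_cast [zsmul_eq_mul]; ring⟩
  zero_mem' := fun m _ => ⟨0, by simp⟩
  smul_mem' := by
    rintro n x hx m hm
    obtain ⟨a, ha⟩ := hx m hm
    exact ⟨n * a, by rw [smul_dotProduct, ha]; push_cast [zsmul_eq_mul]; ring⟩


/-- Generators of the discriminant group. -/
noncomputable def dd : Fin 4 → (Fin 6 → ℚ) :=
  ![![0,0,1/2,0,0,0], ![0,0,0,1/2,0,0], ![0,0,0,0,1/6,1/3], ![0,0,0,0,1/3,1/6]]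

/-- The five isotropic classes of order two. -/
noncomputable def vv : Fin 5 → (Fin 6 → ℚ) :=
  ![dd 0, dd 1, dd 0 + dd 1 + dd 2 + dd 3, dd 0 + dd 1 + (3 : ℚ) • dd 2,
    dd 0 + dd 1 + (3 : ℚ) • dd 3]

lemma mem_intLat' (v : Fin 6 → ℚ) (k : Fin 6 → ℤ) (h : ∀ j, v j = k j) : v ∈ intLat :=
  fun j => ⟨k j, h j⟩

lemma quad_eq (x y : Fin 6 → ℚ) : x ⬝ᵥ Qq.mulVec y =
    x 0 * y 1 + x 1 * y 0 + 2*x 2*y 3 + 2*x 3*y 2 - 4*x 4*y 4 + 2*x 4*y 5 + 2*x 5*y 4 - 4*x 5*y 5 := by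
  simp [Qq, Matrix.mulVec, dotProduct, Fin.sum_univ_succ, Matrix.cons_val_zero,
    Matrix.cons_val_succ, show (Fin.succ 2 : Fin 6) = 3 from rfl,
    show ((Fin.succ 2).succ : Fin 6) = 4 from rfl, show ((Fin.succ 2).succ.succ : Fin 6) = 5 from rfl]
  ring

lemma dot_e0 (x : Fin 6 → ℚ) : x ⬝ᵥ Qq.mulVec ![1,0,0,0,0,0] = x 1 := by
  simp [Qq, Matrix.mulVec, dotProduct, Fin.sum_univ_succ, Matrix.cons_val_zero,
    Matrix.cons_val_succ]

lemma dot_e1 (x : Fin 6 → ℚ) : x ⬝ᵥ Qq.mulVec ![0,1,0,0,0,0] = x 0 := by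
  simp [Qq, Matrix.mulVec, dotProduct, Fin.sum_univ_succ, Matrix.cons_val_zero,
    Matrix.cons_val_succ]

lemma vv0 : vv 0 = ![0,0,1/2,0,0,0] := by
  funext j; fin_cases j <;> norm_num [vv, dd, Matrix.vecHead, Matrix.vecTail]
lemma vv1 : vv 1 = ![0,0,0,1/2,0,0] := by
  funext j; fin_cases j <;> norm_num [vv, dd, Matrix.vecHead, Matrix.vecTail]
lemma vv2 : vv 2 = ![0,0,1/2,1/2,1/2,1/2] := by
  funext j; fin_cases j <;> simp [vv, dd] <;> norm_num
lemma vv3 : vv 3 = ![0,0,1/2,1/2,1/2,1] := by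
  funext j; fin_cases j <;> simp [vv, dd] <;> norm_num
lemma vv4 : vv 4 = ![0,0,1/2,1/2,1,1/2] := by
  funext j; fin_cases j <;> simp [vv, dd] <;> norm_num

lemma castEven {n : ℤ} (h : Even n) : (n : ZMod 2) = 0 := by
  obtain ⟨t, rfl⟩ := h
  push_cast
  rw [← two_mul, show (2 : ZMod 2) = 0 from rfl, zero_mul]
lemma castOdd {n : ℤ} (h : Odd n) : (n : ZMod 2) = 1 := by
  obtain ⟨t, rfl⟩ := h
  push_cast
  rw [show (2 : ZMod 2) = 0 from rfl, zero_mul, zero_add]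
lemma deadQ (A n2 n3 n4 n5 k : ℤ) (hZ : 2*A + n2*n3 - n4^2 + n4*n5 - n5^2 = 2*k) :
    (n2 : ZMod 2) * n3 - (n4:ZMod 2)^2 + (n4:ZMod 2)*n5 - (n5:ZMod 2)^2 = 0 := by
  have hz := congrArg (fun z : ℤ => (z : ZMod 2)) hZ
  push_cast at hz
  rw [show (2 : ZMod 2) = 0 from rfl, zero_mul, zero_mul, zero_add] at hz
  exact hz

/-- An element `x ∈ M̌` represents a class of order two in `M̌/M` on which the
discriminant quadratic form vanishes iff it is congruent mod `M` to one of
`v₁, …, v₅`. -/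
theorem stmt7 (x : Fin 6 → ℚ) (hx : x ∈ dualLat) :
    ((2 : ℤ) • x ∈ intLat ∧ x ∉ intLat ∧ ∃ k : ℤ, x ⬝ᵥ Qq.mulVec x = 2 * k) ↔
      ∃ i : Fin 5, x - vv i ∈ intLat := by
  constructor
  · rintro ⟨h2, hnx, k, hk⟩
    obtain ⟨b, hb⟩ := hx ![0,1,0,0,0,0]
      (mem_intLat' _ ![0,1,0,0,0,0] (by intro j; fin_cases j <;> norm_num))
    obtain ⟨a, ha⟩ := hx ![1,0,0,0,0,0]
      (mem_intLat' _ ![1,0,0,0,0,0] (by intro j; fin_cases j <;> norm_num))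
    rw [dot_e1] at hb
    rw [dot_e0] at ha
    have key : ∀ i : Fin 6, ∃ n : ℤ, x i = (n : ℚ) / 2 := by
      intro i
      obtain ⟨n, hn⟩ := h2 i
      refine ⟨n, ?_⟩
      rw [Pi.smul_apply, zsmul_eq_mul] at hn
      push_cast at hn ⊢
      linarith
    obtain ⟨n2, e2⟩ := key 2
    obtain ⟨n3, e3⟩ := key 3
    obtain ⟨n4, e4⟩ := key 4
    obtain ⟨n5, e5⟩ := key 5
    have hZ : 2*(b*a) + n2*n3 - n4^2 + n4*n5 - n5^2 = 2*k := by
      have h := hk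
      rw [quad_eq, hb, ha, e2, e3, e4, e5] at h
      have : ((2*(b*a) + n2*n3 - n4^2 + n4*n5 - n5^2 : ℤ) : ℚ) = ((2*k : ℤ) : ℚ) := by
        push_cast
        linear_combination h
      exact_mod_cast this
    have dq := deadQ _ _ _ _ _ _ hZ
    rcases Int.even_or_odd n2 with p2|p2 <;> rcases Int.even_or_odd n3 with p3|p3 <;>
      rcases Int.even_or_odd n4 with p4|p4 <;> rcases Int.even_or_odd n5 with p5|p5
    · -- (e,e,e,e) : contradiction with x ∉ M
      obtain ⟨t2, q2⟩ := p2; obtain ⟨t3, q3⟩ := p3; obtain ⟨t4, q4⟩ := p4; obtain ⟨t5, q5⟩ := p5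
      refine (hnx (mem_intLat' x ![b, a, t2, t3, t4, t5] ?_)).elim
      intro j; fin_cases j
      · exact hb
      · exact ha
      · show x 2 = (t2:ℚ); rw [e2, q2]; push_cast; ring
      · show x 3 = (t3:ℚ); rw [e3, q3]; push_cast; ring
      · show x 4 = (t4:ℚ); rw [e4, q4]; push_cast; ring
      · show x 5 = (t5:ℚ); rw [e5, q5]; push_cast; ring
    · exfalso; rw [castEven p2, castEven p3, castEven p4, castOdd p5] at dq; revert dq; decide
    · exfalso; rw [castEven p2, castEven p3, castOdd p4, castEven p5] at dq; revert dq; decide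
    · exfalso; rw [castEven p2, castEven p3, castOdd p4, castOdd p5] at dq; revert dq; decide
    · -- (e,o,e,e) : i = 1
      obtain ⟨t2, q2⟩ := p2; obtain ⟨t3, q3⟩ := p3; obtain ⟨t4, q4⟩ := p4; obtain ⟨t5, q5⟩ := p5
      refine ⟨1, ?_⟩
      rw [vv1]
      refine mem_intLat' _ ![b, a, t2, t3, t4, t5] ?_
      intro j; fin_cases j
      · show x 0 - 0 = (b:ℚ); rw [hb]; ring
      · show x 1 - 0 = (a:ℚ); rw [ha]; ring
      · show x 2 - 0 = (t2:ℚ); rw [e2, q2]; push_cast; ring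
      · show x 3 - 1/2 = (t3:ℚ); rw [e3, q3]; push_cast; ring
      · show x 4 - 0 = (t4:ℚ); rw [e4, q4]; push_cast; ring
      · show x 5 - 0 = (t5:ℚ); rw [e5, q5]; push_cast; ring
    · exfalso; rw [castEven p2, castOdd p3, castEven p4, castOdd p5] at dq; revert dq; decide
    · exfalso; rw [castEven p2, castOdd p3, castOdd p4, castEven p5] at dq; revert dq; decide
    · exfalso; rw [castEven p2, castOdd p3, castOdd p4, castOdd p5] at dq; revert dq; decide
    · -- (o,e,e,e) : i = 0
      obtain ⟨t2, q2⟩ := p2; obtain ⟨t3, q3⟩ := p3; obtain ⟨t4, q4⟩ := p4; obtain ⟨t5, q5⟩ := p5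
      refine ⟨0, ?_⟩
      rw [vv0]
      refine mem_intLat' _ ![b, a, t2, t3, t4, t5] ?_
      intro j; fin_cases j
      · show x 0 - 0 = (b:ℚ); rw [hb]; ring
      · show x 1 - 0 = (a:ℚ); rw [ha]; ring
      · show x 2 - 1/2 = (t2:ℚ); rw [e2, q2]; push_cast; ring
      · show x 3 - 0 = (t3:ℚ); rw [e3, q3]; push_cast; ring
      · show x 4 - 0 = (t4:ℚ); rw [e4, q4]; push_cast; ring
      · show x 5 - 0 = (t5:ℚ); rw [e5, q5]; push_cast; ring
    · exfalso; rw [castOdd p2, castEven p3, castEven p4, castOdd p5] at dq; revert dq; decide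
    · exfalso; rw [castOdd p2, castEven p3, castOdd p4, castEven p5] at dq; revert dq; decide
    · exfalso; rw [castOdd p2, castEven p3, castOdd p4, castOdd p5] at dq; revert dq; decide
    · exfalso; rw [castOdd p2, castOdd p3, castEven p4, castEven p5] at dq; revert dq; decide
    · -- (o,o,e,o) : i = 4
      obtain ⟨t2, q2⟩ := p2; obtain ⟨t3, q3⟩ := p3; obtain ⟨t4, q4⟩ := p4; obtain ⟨t5, q5⟩ := p5
      refine ⟨4, ?_⟩
      rw [vv4]
      refine mem_intLat' _ ![b, a, t2, t3, t4 - 1, t5] ?_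
      intro j; fin_cases j
      · show x 0 - 0 = (b:ℚ); rw [hb]; ring
      · show x 1 - 0 = (a:ℚ); rw [ha]; ring
      · show x 2 - 1/2 = (t2:ℚ); rw [e2, q2]; push_cast; ring
      · show x 3 - 1/2 = (t3:ℚ); rw [e3, q3]; push_cast; ring
      · show x 4 - 1 = ((t4 - 1 : ℤ):ℚ); rw [e4, q4]; push_cast; ring
      · show x 5 - 1/2 = (t5:ℚ); rw [e5, q5]; push_cast; ring
    · -- (o,o,o,e) : i = 3
      obtain ⟨t2, q2⟩ := p2; obtain ⟨t3, q3⟩ := p3; obtain ⟨t4, q4⟩ := p4; obtain ⟨t5, q5⟩ := p5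
      refine ⟨3, ?_⟩
      rw [vv3]
      refine mem_intLat' _ ![b, a, t2, t3, t4, t5 - 1] ?_
      intro j; fin_cases j
      · show x 0 - 0 = (b:ℚ); rw [hb]; ring
      · show x 1 - 0 = (a:ℚ); rw [ha]; ring
      · show x 2 - 1/2 = (t2:ℚ); rw [e2, q2]; push_cast; ring
      · show x 3 - 1/2 = (t3:ℚ); rw [e3, q3]; push_cast; ring
      · show x 4 - 1/2 = (t4:ℚ); rw [e4, q4]; push_cast; ring
      · show x 5 - 1 = ((t5 - 1 : ℤ):ℚ); rw [e5, q5]; push_cast; ring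
    · -- (o,o,o,o) : i = 2
      obtain ⟨t2, q2⟩ := p2; obtain ⟨t3, q3⟩ := p3; obtain ⟨t4, q4⟩ := p4; obtain ⟨t5, q5⟩ := p5
      refine ⟨2, ?_⟩
      rw [vv2]
      refine mem_intLat' _ ![b, a, t2, t3, t4, t5] ?_
      intro j; fin_cases j
      · show x 0 - 0 = (b:ℚ); rw [hb]; ring
      · show x 1 - 0 = (a:ℚ); rw [ha]; ring
      · show x 2 - 1/2 = (t2:ℚ); rw [e2, q2]; push_cast; ring
      · show x 3 - 1/2 = (t3:ℚ); rw [e3, q3]; push_cast; ring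
      · show x 4 - 1/2 = (t4:ℚ); rw [e4, q4]; push_cast; ring
      · show x 5 - 1/2 = (t5:ℚ); rw [e5, q5]; push_cast; ring
  · rintro ⟨i, hi⟩
    obtain ⟨m0, hm0⟩ := hi 0
    obtain ⟨m1, hm1⟩ := hi 1
    obtain ⟨m2, hm2⟩ := hi 2
    obtain ⟨m3, hm3⟩ := hi 3
    obtain ⟨m4, hm4⟩ := hi 4
    obtain ⟨m5, hm5⟩ := hi 5
    have hd : i = 0 ∨ i = 1 ∨ i = 2 ∨ i = 3 ∨ i = 4 := by fin_cases i <;> decide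
    rcases hd with rfl | rfl | rfl | rfl | rfl
    · rw [vv0] at hm0 hm1 hm2 hm3 hm4 hm5
      -- v = (0,0,1/2,0,0,0)
      have c0 : x 0 = (m0:ℚ) := by have h : x 0 - 0 = (m0:ℚ) := hm0; linarith
      have c1 : x 1 = (m1:ℚ) := by have h : x 1 - 0 = (m1:ℚ) := hm1; linarith
      have c2 : x 2 = 1/2 + (m2:ℚ) := by have h : x 2 - 1/2 = (m2:ℚ) := hm2; linarith
      have c3 : x 3 = (m3:ℚ) := by have h : x 3 - 0 = (m3:ℚ) := hm3; linarith
      have c4 : x 4 = (m4:ℚ) := by have h : x 4 - 0 = (m4:ℚ) := hm4; linarith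
      have c5 : x 5 = (m5:ℚ) := by have h : x 5 - 0 = (m5:ℚ) := hm5; linarith
      refine ⟨?_, ?_, ?_⟩
      · refine mem_intLat' _ ![2*m0, 2*m1, 1 + 2*m2, 2*m3, 2*m4, 2*m5] ?_
        intro j; fin_cases j
        · show (2:ℤ) • x 0 = ((2*m0 : ℤ):ℚ); rw [zsmul_eq_mul, c0]; push_cast; ring
        · show (2:ℤ) • x 1 = ((2*m1 : ℤ):ℚ); rw [zsmul_eq_mul, c1]; push_cast; ring
        · show (2:ℤ) • x 2 = ((1 + 2*m2 : ℤ):ℚ); rw [zsmul_eq_mul, c2]; push_cast; ring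
        · show (2:ℤ) • x 3 = ((2*m3 : ℤ):ℚ); rw [zsmul_eq_mul, c3]; push_cast; ring
        · show (2:ℤ) • x 4 = ((2*m4 : ℤ):ℚ); rw [zsmul_eq_mul, c4]; push_cast; ring
        · show (2:ℤ) • x 5 = ((2*m5 : ℤ):ℚ); rw [zsmul_eq_mul, c5]; push_cast; ring
      · intro hm
        obtain ⟨c, hc⟩ := hm 2
        have h1 : ((2*c - 2*m2 : ℤ):ℚ) = 1 := by push_cast; rw [hc] at c2; linarith
        have h2 : (2*c - 2*m2 : ℤ) = 1 := by exact_mod_cast h1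
        omega
      · refine ⟨m0*m1 + m3 + 2*m2*m3 - 2*m4^2 + 2*m4*m5 - 2*m5^2, ?_⟩
        rw [quad_eq, c0, c1, c2, c3, c4, c5]; push_cast; ring
    · rw [vv1] at hm0 hm1 hm2 hm3 hm4 hm5
      -- v = (0,0,0,1/2,0,0)
      have c0 : x 0 = (m0:ℚ) := by have h : x 0 - 0 = (m0:ℚ) := hm0; linarith
      have c1 : x 1 = (m1:ℚ) := by have h : x 1 - 0 = (m1:ℚ) := hm1; linarith
      have c2 : x 2 = (m2:ℚ) := by have h : x 2 - 0 = (m2:ℚ) := hm2; linarith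
      have c3 : x 3 = 1/2 + (m3:ℚ) := by have h : x 3 - 1/2 = (m3:ℚ) := hm3; linarith
      have c4 : x 4 = (m4:ℚ) := by have h : x 4 - 0 = (m4:ℚ) := hm4; linarith
      have c5 : x 5 = (m5:ℚ) := by have h : x 5 - 0 = (m5:ℚ) := hm5; linarith
      refine ⟨?_, ?_, ?_⟩
      · refine mem_intLat' _ ![2*m0, 2*m1, 2*m2, 1 + 2*m3, 2*m4, 2*m5] ?_
        intro j; fin_cases j
        · show (2:ℤ) • x 0 = ((2*m0 : ℤ):ℚ); rw [zsmul_eq_mul, c0]; push_cast; ring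
        · show (2:ℤ) • x 1 = ((2*m1 : ℤ):ℚ); rw [zsmul_eq_mul, c1]; push_cast; ring
        · show (2:ℤ) • x 2 = ((2*m2 : ℤ):ℚ); rw [zsmul_eq_mul, c2]; push_cast; ring
        · show (2:ℤ) • x 3 = ((1 + 2*m3 : ℤ):ℚ); rw [zsmul_eq_mul, c3]; push_cast; ring
        · show (2:ℤ) • x 4 = ((2*m4 : ℤ):ℚ); rw [zsmul_eq_mul, c4]; push_cast; ring
        · show (2:ℤ) • x 5 = ((2*m5 : ℤ):ℚ); rw [zsmul_eq_mul, c5]; push_cast; ring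
      · intro hm
        obtain ⟨c, hc⟩ := hm 3
        have h1 : ((2*c - 2*m3 : ℤ):ℚ) = 1 := by push_cast; rw [hc] at c3; linarith
        have h2 : (2*c - 2*m3 : ℤ) = 1 := by exact_mod_cast h1
        omega
      · refine ⟨m0*m1 + m2 + 2*m2*m3 - 2*m4^2 + 2*m4*m5 - 2*m5^2, ?_⟩
        rw [quad_eq, c0, c1, c2, c3, c4, c5]; push_cast; ring
    · rw [vv2] at hm0 hm1 hm2 hm3 hm4 hm5
      -- v = (0,0,1/2,1/2,1/2,1/2)
      have c0 : x 0 = (m0:ℚ) := by have h : x 0 - 0 = (m0:ℚ) := hm0; linarith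
      have c1 : x 1 = (m1:ℚ) := by have h : x 1 - 0 = (m1:ℚ) := hm1; linarith
      have c2 : x 2 = 1/2 + (m2:ℚ) := by have h : x 2 - 1/2 = (m2:ℚ) := hm2; linarith
      have c3 : x 3 = 1/2 + (m3:ℚ) := by have h : x 3 - 1/2 = (m3:ℚ) := hm3; linarith
      have c4 : x 4 = 1/2 + (m4:ℚ) := by have h : x 4 - 1/2 = (m4:ℚ) := hm4; linarith
      have c5 : x 5 = 1/2 + (m5:ℚ) := by have h : x 5 - 1/2 = (m5:ℚ) := hm5; linarith
      refine ⟨?_, ?_, ?_⟩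
      · refine mem_intLat' _ ![2*m0, 2*m1, 1 + 2*m2, 1 + 2*m3, 1 + 2*m4, 1 + 2*m5] ?_
        intro j; fin_cases j
        · show (2:ℤ) • x 0 = ((2*m0 : ℤ):ℚ); rw [zsmul_eq_mul, c0]; push_cast; ring
        · show (2:ℤ) • x 1 = ((2*m1 : ℤ):ℚ); rw [zsmul_eq_mul, c1]; push_cast; ring
        · show (2:ℤ) • x 2 = ((1 + 2*m2 : ℤ):ℚ); rw [zsmul_eq_mul, c2]; push_cast; ring
        · show (2:ℤ) • x 3 = ((1 + 2*m3 : ℤ):ℚ); rw [zsmul_eq_mul, c3]; push_cast; ring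
        · show (2:ℤ) • x 4 = ((1 + 2*m4 : ℤ):ℚ); rw [zsmul_eq_mul, c4]; push_cast; ring
        · show (2:ℤ) • x 5 = ((1 + 2*m5 : ℤ):ℚ); rw [zsmul_eq_mul, c5]; push_cast; ring
      · intro hm
        obtain ⟨c, hc⟩ := hm 2
        have h1 : ((2*c - 2*m2 : ℤ):ℚ) = 1 := by push_cast; rw [hc] at c2; linarith
        have h2 : (2*c - 2*m2 : ℤ) = 1 := by exact_mod_cast h1
        omega
      · refine ⟨m0*m1 + m2 + m3 + 2*m2*m3 - m4 - m5 - 2*m4^2 + 2*m4*m5 - 2*m5^2, ?_⟩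
        rw [quad_eq, c0, c1, c2, c3, c4, c5]; push_cast; ring
    · rw [vv3] at hm0 hm1 hm2 hm3 hm4 hm5
      -- v = (0,0,1/2,1/2,1/2,1)
      have c0 : x 0 = (m0:ℚ) := by have h : x 0 - 0 = (m0:ℚ) := hm0; linarith
      have c1 : x 1 = (m1:ℚ) := by have h : x 1 - 0 = (m1:ℚ) := hm1; linarith
      have c2 : x 2 = 1/2 + (m2:ℚ) := by have h : x 2 - 1/2 = (m2:ℚ) := hm2; linarith
      have c3 : x 3 = 1/2 + (m3:ℚ) := by have h : x 3 - 1/2 = (m3:ℚ) := hm3; linarith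
      have c4 : x 4 = 1/2 + (m4:ℚ) := by have h : x 4 - 1/2 = (m4:ℚ) := hm4; linarith
      have c5 : x 5 = 1 + (m5:ℚ) := by have h : x 5 - 1 = (m5:ℚ) := hm5; linarith
      refine ⟨?_, ?_, ?_⟩
      · refine mem_intLat' _ ![2*m0, 2*m1, 1 + 2*m2, 1 + 2*m3, 1 + 2*m4, 2 + 2*m5] ?_
        intro j; fin_cases j
        · show (2:ℤ) • x 0 = ((2*m0 : ℤ):ℚ); rw [zsmul_eq_mul, c0]; push_cast; ring
        · show (2:ℤ) • x 1 = ((2*m1 : ℤ):ℚ); rw [zsmul_eq_mul, c1]; push_cast; ring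
        · show (2:ℤ) • x 2 = ((1 + 2*m2 : ℤ):ℚ); rw [zsmul_eq_mul, c2]; push_cast; ring
        · show (2:ℤ) • x 3 = ((1 + 2*m3 : ℤ):ℚ); rw [zsmul_eq_mul, c3]; push_cast; ring
        · show (2:ℤ) • x 4 = ((1 + 2*m4 : ℤ):ℚ); rw [zsmul_eq_mul, c4]; push_cast; ring
        · show (2:ℤ) • x 5 = ((2 + 2*m5 : ℤ):ℚ); rw [zsmul_eq_mul, c5]; push_cast; ring
      · intro hm
        obtain ⟨c, hc⟩ := hm 2
        have h1 : ((2*c - 2*m2 : ℤ):ℚ) = 1 := by push_cast; rw [hc] at c2; linarith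
        have h2 : (2*c - 2*m2 : ℤ) = 1 := by exact_mod_cast h1
        omega
      · refine ⟨-1 + m0*m1 + m2 + m3 + 2*m2*m3 - 2*m4^2 + 2*m4*m5 - 3*m5 - 2*m5^2, ?_⟩
        rw [quad_eq, c0, c1, c2, c3, c4, c5]; push_cast; ring
    · rw [vv4] at hm0 hm1 hm2 hm3 hm4 hm5
      -- v = (0,0,1/2,1/2,1,1/2)
      have c0 : x 0 = (m0:ℚ) := by have h : x 0 - 0 = (m0:ℚ) := hm0; linarith
      have c1 : x 1 = (m1:ℚ) := by have h : x 1 - 0 = (m1:ℚ) := hm1; linarith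
      have c2 : x 2 = 1/2 + (m2:ℚ) := by have h : x 2 - 1/2 = (m2:ℚ) := hm2; linarith
      have c3 : x 3 = 1/2 + (m3:ℚ) := by have h : x 3 - 1/2 = (m3:ℚ) := hm3; linarith
      have c4 : x 4 = 1 + (m4:ℚ) := by have h : x 4 - 1 = (m4:ℚ) := hm4; linarith
      have c5 : x 5 = 1/2 + (m5:ℚ) := by have h : x 5 - 1/2 = (m5:ℚ) := hm5; linarith
      refine ⟨?_, ?_, ?_⟩
      · refine mem_intLat' _ ![2*m0, 2*m1, 1 + 2*m2, 1 + 2*m3, 2 + 2*m4, 1 + 2*m5] ?_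
        intro j; fin_cases j
        · show (2:ℤ) • x 0 = ((2*m0 : ℤ):ℚ); rw [zsmul_eq_mul, c0]; push_cast; ring
        · show (2:ℤ) • x 1 = ((2*m1 : ℤ):ℚ); rw [zsmul_eq_mul, c1]; push_cast; ring
        · show (2:ℤ) • x 2 = ((1 + 2*m2 : ℤ):ℚ); rw [zsmul_eq_mul, c2]; push_cast; ring
        · show (2:ℤ) • x 3 = ((1 + 2*m3 : ℤ):ℚ); rw [zsmul_eq_mul, c3]; push_cast; ring
        · show (2:ℤ) • x 4 = ((2 + 2*m4 : ℤ):ℚ); rw [zsmul_eq_mul, c4]; push_cast; ring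
        · show (2:ℤ) • x 5 = ((1 + 2*m5 : ℤ):ℚ); rw [zsmul_eq_mul, c5]; push_cast; ring
      · intro hm
        obtain ⟨c, hc⟩ := hm 2
        have h1 : ((2*c - 2*m2 : ℤ):ℚ) = 1 := by push_cast; rw [hc] at c2; linarith
        have h2 : (2*c - 2*m2 : ℤ) = 1 := by exact_mod_cast h1
        omega
      · refine ⟨-1 + m0*m1 + m2 + m3 + 2*m2*m3 - 3*m4 - 2*m4^2 + 2*m4*m5 - 2*m5^2, ?_⟩
        rw [quad_eq, c0, c1, c2, c3, c4, c5]; push_cast; ring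
end

section
/- Let Q = [[0,1],[1,0]] ⊕ [[0,2],[2,0]] ⊕ [[-4,2],[2,-4]] and let g = [a_{ij}] ∈ GL₆(ℤ) satisfy ᵗgQg = Q. Then the upper-left 2×2 block [[a₁₁,a₁₂],[a₂₁,a₂₂]] is congruent, mod 2, to either the identity matrix I₂ or the swap matrix [[0,1],[1,0]]. -/
open Matrix

/-- The Gram matrix of `U ⊕ U(2) ⊕ A₂(2)`, over `ℤ`. -/
def Qi : Matrix (Fin 6) (Fin 6) ℤ :=
  !![0,1,0,0,0,0; 1,0,0,0,0,0; 0,0,0,2,0,0; 0,0,2,0,0,0; 0,0,0,0,-4,2; 0,0,0,0,2,-4]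

lemma dv0 (x : ℤ) (h : (x : ZMod 2) = 0) : (2 : ℤ) ∣ x :=
  (ZMod.intCast_zmod_eq_zero_iff_dvd x 2).1 h

lemma dv1 (x : ℤ) (h : (x : ZMod 2) = 1) : (2 : ℤ) ∣ x - 1 := by
  apply (ZMod.intCast_zmod_eq_zero_iff_dvd _ 2).1
  push_cast
  rw [h, sub_self]

/-- For `g ∈ O(M)`, the upper-left 2×2 block of `g` is congruent mod 2 either to
the identity or to the swap matrix. -/
theorem stmt12 (g : Matrix (Fin 6) (Fin 6) ℤ) (hg : IsUnit g.det)
    (h : gᵀ * Qi * g = Qi) :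
    ((2 : ℤ) ∣ g 0 0 - 1 ∧ (2 : ℤ) ∣ g 0 1 ∧ (2 : ℤ) ∣ g 1 0 ∧ (2 : ℤ) ∣ g 1 1 - 1) ∨
    ((2 : ℤ) ∣ g 0 0 ∧ (2 : ℤ) ∣ g 0 1 - 1 ∧ (2 : ℤ) ∣ g 1 0 - 1 ∧ (2 : ℤ) ∣ g 1 1) := by
  have key : ∀ a b c d : ZMod 2, a * c = 0 → b * d = 0 → a * d + c * b = 1 →
      (a = 1 ∧ b = 0 ∧ c = 0 ∧ d = 1) ∨ (a = 0 ∧ b = 1 ∧ c = 1 ∧ d = 0) := by decide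
  have e00 := congrFun (congrFun h 0) 0
  have e11 := congrFun (congrFun h 1) 1
  have e01 := congrFun (congrFun h 0) 1
  simp [Qi, Matrix.mul_apply, Fin.sum_univ_succ, Matrix.cons_val_succ] at e00 e11 e01
  have f1 : 2 * (g 0 0 * g 1 0) =
      2 * (2 * (-(g 3 0 * g 2 0) - g 4 0 * g 5 0 + g 4 0 ^ 2 + g 5 0 ^ 2)) := by
    linear_combination e00
  have f2 : 2 * (g 0 1 * g 1 1) =
      2 * (2 * (-(g 3 1 * g 2 1) - g 4 1 * g 5 1 + g 4 1 ^ 2 + g 5 1 ^ 2)) := by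
    linear_combination e11
  have f3 : g 0 0 * g 1 1 + g 1 0 * g 0 1 - 1 =
      2 * (-(g 3 0 * g 2 1) - g 2 0 * g 3 1 + g 4 0 * g 4 1 * 2 - g 4 0 * g 5 1
        + g 5 0 * g 5 1 * 2 - g 5 0 * g 4 1) := by
    linear_combination e01
  have d1 : (2 : ℤ) ∣ g 0 0 * g 1 0 := ⟨_, mul_left_cancel₀ two_ne_zero f1⟩
  have d2 : (2 : ℤ) ∣ g 0 1 * g 1 1 := ⟨_, mul_left_cancel₀ two_ne_zero f2⟩
  have d3 : (2 : ℤ) ∣ g 0 0 * g 1 1 + g 1 0 * g 0 1 - 1 := ⟨_, f3⟩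
  have c1 := (ZMod.intCast_zmod_eq_zero_iff_dvd _ 2).2 d1
  have c2 := (ZMod.intCast_zmod_eq_zero_iff_dvd _ 2).2 d2
  have c3 := (ZMod.intCast_zmod_eq_zero_iff_dvd _ 2).2 d3
  push_cast at c1 c2 c3
  rcases key ((g 0 0 : ℤ) : ZMod 2) ((g 0 1 : ℤ) : ZMod 2) ((g 1 0 : ℤ) : ZMod 2)
      ((g 1 1 : ℤ) : ZMod 2) c1 c2 (by linear_combination c3) with
    ⟨ha, hb, hc, hd⟩ | ⟨ha, hb, hc, hd⟩
  · exact Or.inl ⟨dv1 _ ha, dv0 _ hb, dv0 _ hc, dv1 _ hd⟩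
  · exact Or.inr ⟨dv0 _ ha, dv1 _ hb, dv1 _ hc, dv0 _ hd⟩
end

section
/- Let Q = [[0,1],[1,0]] ⊕ [[0,2],[2,0]] ⊕ [[-4,2],[2,-4]] and let O(M) = {g ∈ GL₆(ℤ) : ᵗgQg = Q}. The subset O(M)₀ of elements whose upper-left 2×2 block is ≡ I₂ mod 2 is a normal subgroup of index 2 in O(M), with the nontrivial coset represented by g₀ = [[0,1],[1,0]] ⊕ I₄. -/
open Matrix

/-- Membership in the integral orthogonal group `O(M)`. -/
def InOM (g : Matrix (Fin 6) (Fin 6) ℤ) : Prop := IsUnit g.det ∧ gᵀ * Qi * g = Qi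

/-- The upper-left 2×2 block of `g` is congruent to `I₂` mod 2. -/
def BlkI (g : Matrix (Fin 6) (Fin 6) ℤ) : Prop :=
  (2 : ℤ) ∣ g 0 0 - 1 ∧ (2 : ℤ) ∣ g 0 1 ∧ (2 : ℤ) ∣ g 1 0 ∧ (2 : ℤ) ∣ g 1 1 - 1

/-- The coset representative `g₀ = [[0,1],[1,0]] ⊕ I₄`. -/
def gZero : Matrix (Fin 6) (Fin 6) ℤ :=
  !![0,1,0,0,0,0; 1,0,0,0,0,0; 0,0,1,0,0,0; 0,0,0,1,0,0; 0,0,0,0,1,0; 0,0,0,0,0,1]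

lemma dvd2 (n : ℤ) : (2:ℤ) ∣ n ↔ (n : ZMod 2) = 0 := by
  rw [ZMod.intCast_zmod_eq_zero_iff_dvd]; norm_num

lemma blk_iff (g : Matrix (Fin 6) (Fin 6) ℤ) :
    BlkI g ↔ ((g 0 0 : ZMod 2) = 1 ∧ (g 0 1 : ZMod 2) = 0 ∧ (g 1 0 : ZMod 2) = 0 ∧
      (g 1 1 : ZMod 2) = 1) := by
  simp only [BlkI, dvd2]; push_cast; rw [sub_eq_zero, sub_eq_zero]

lemma InOM_mul {g h : Matrix (Fin 6) (Fin 6) ℤ} (hg : InOM g) (hh : InOM h) : InOM (g * h) := by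
  refine ⟨by rw [Matrix.det_mul]; exact hg.1.mul hh.1, ?_⟩
  have : (g * h)ᵀ * Qi * (g * h) = hᵀ * (gᵀ * Qi * g) * h := by
    rw [Matrix.transpose_mul]; noncomm_ring
  rw [this, hg.2]; exact hh.2

lemma z2 : ∀ a b c d : ZMod 2, a*c = 0 → b*d = 0 → c*b + a*d = 1 →
    (a=1∧b=0∧c=0∧d=1) ∨ (a=0∧b=1∧c=1∧d=0) := by decide

lemma z3 (a b c d x y : ZMod 2)
    (h : (a=1∧b=0∧c=0∧d=1) ∨ (a=0∧b=1∧c=1∧d=0))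
    (h0 : a*y + c*x = 0) (h1 : b*y + d*x = 0) : x = 0 ∧ y = 0 := by
  rcases h with ⟨ha,hb,hc,hd⟩ | ⟨ha,hb,hc,hd⟩ <;> subst ha <;> subst hb <;> subst hc <;>
    subst hd <;> revert h0 h1 <;> revert x y <;> decide

lemma master (g : Matrix (Fin 6) (Fin 6) ℤ) (hg : InOM g) :
    (((g 0 0 : ZMod 2) = 1 ∧ (g 0 1 : ZMod 2) = 0 ∧ (g 1 0 : ZMod 2) = 0 ∧ (g 1 1 : ZMod 2) = 1) ∨
     ((g 0 0 : ZMod 2) = 0 ∧ (g 0 1 : ZMod 2) = 1 ∧ (g 1 0 : ZMod 2) = 1 ∧ (g 1 1 : ZMod 2) = 0)) ∧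
    (∀ k : Fin 6, 2 ≤ (k:ℕ) → (g 0 k : ZMod 2) = 0 ∧ (g 1 k : ZMod 2) = 0) := by
  have key : ∀ i j : Fin 6,
      g 1 i * g 0 j + g 0 i * g 1 j + g 3 i * 2 * g 2 j + g 2 i * 2 * g 3 j +
        (-(g 4 i * 4) + g 5 i * 2) * g 4 j + (g 4 i * 2 + -(g 5 i * 4)) * g 5 j = Qi i j := by
    intro i j
    have h := congrFun (congrFun hg.2 i) j
    rw [← h, Matrix.mul_apply]
    simp [Matrix.mul_apply, Matrix.transpose_apply, Qi, Fin.sum_univ_six,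
      show (5:Fin 6) = Fin.succ 4 from rfl, Matrix.cons_val_succ]
    try simp only [show (Fin.succ 4 : Fin 6) = 5 from rfl]
    try ring
  have hd1 : (2:ℤ) ∣ g 0 0 * g 1 0 := by
    have h := key 0 0
    simp only [Qi] at h; norm_num at h
    exact ⟨-(g 2 0 * g 3 0) + g 4 0 * g 4 0 - g 4 0 * g 5 0 + g 5 0 * g 5 0, by linarith⟩
  have hd2 : (2:ℤ) ∣ g 0 1 * g 1 1 := by
    have h := key 1 1
    simp only [Qi] at h; norm_num at h
    exact ⟨-(g 2 1 * g 3 1) + g 4 1 * g 4 1 - g 4 1 * g 5 1 + g 5 1 * g 5 1, by linarith⟩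
  have hc : ∀ i j : Fin 6,
      (g 1 i : ZMod 2) * g 0 j + (g 0 i : ZMod 2) * g 1 j = ((Qi i j : ℤ) : ZMod 2) := by
    intro i j
    have h := congrArg (fun n : ℤ => (n : ZMod 2)) (key i j)
    push_cast at h
    rw [show (2 : ZMod 2) = 0 by decide, show (4 : ZMod 2) = 0 by decide] at h
    rw [← h]; ring
  have e1 : (g 0 0 : ZMod 2) * g 1 0 = 0 := by
    rw [dvd2] at hd1; push_cast at hd1; rw [← hd1]
  have e2 : (g 0 1 : ZMod 2) * g 1 1 = 0 := by
    rw [dvd2] at hd2; push_cast at hd2; rw [← hd2]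
  have e3 : (g 1 0 : ZMod 2) * g 0 1 + (g 0 0 : ZMod 2) * g 1 1 = 1 := by
    have h := hc 0 1
    rw [show ((Qi 0 1 : ℤ) : ZMod 2) = 1 by decide] at h; exact h
  have hcase := z2 _ _ _ _ e1 e2 e3
  have hQ : ∀ k : Fin 6, 2 ≤ (k:ℕ) → ((Qi 0 k : ℤ) : ZMod 2) = 0 ∧ ((Qi 1 k : ℤ) : ZMod 2) = 0 := by
    decide
  refine ⟨hcase, ?_⟩
  intro k hk
  have h0 : (g 0 0 : ZMod 2) * g 1 k + (g 1 0 : ZMod 2) * g 0 k = 0 := by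
    have h := hc 0 k
    rw [(hQ k hk).1] at h
    rw [← h]; ring
  have h1 : (g 0 1 : ZMod 2) * g 1 k + (g 1 1 : ZMod 2) * g 0 k = 0 := by
    have h := hc 1 k
    rw [(hQ k hk).2] at h
    rw [← h]; ring
  exact z3 _ _ _ _ _ _ hcase h0 h1

lemma mul_cast {g : Matrix (Fin 6) (Fin 6) ℤ} (h : Matrix (Fin 6) (Fin 6) ℤ) (hg : InOM g)
    (i j : Fin 6) (hi : (i : ℕ) < 2) :
    (((g * h) i j : ℤ) : ZMod 2) = (g i 0 : ZMod 2) * (h 0 j) + (g i 1 : ZMod 2) * (h 1 j) := by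
  have m := (master g hg).2
  have hi' : i = 0 ∨ i = 1 := by
    rcases (show (i:ℕ) = 0 ∨ (i:ℕ) = 1 by omega) with h' | h'
    · exact Or.inl (Fin.ext (by simpa using h'))
    · exact Or.inr (Fin.ext (by simpa using h'))
  rw [Matrix.mul_apply, Fin.sum_univ_six]
  push_cast
  rcases hi' with rfl | rfl
  · rw [(m 2 (by decide)).1, (m 3 (by decide)).1, (m 4 (by decide)).1,
      (m 5 (by decide)).1]; ring
  · rw [(m 2 (by decide)).2, (m 3 (by decide)).2, (m 4 (by decide)).2,
      (m 5 (by decide)).2]; ring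

/-- `O(M)₀ = {g ∈ O(M) : upper-left 2×2 block ≡ I₂ mod 2}` is a normal subgroup of
index 2 in `O(M)`, whose nontrivial coset is represented by `g₀`. -/
theorem stmt13 :
    (InOM 1 ∧ BlkI 1) ∧
    (∀ g h, InOM g → InOM h → BlkI g → BlkI h → BlkI (g * h)) ∧
    (∀ g h, InOM g → InOM h → g * h = 1 → BlkI g → BlkI h) ∧
    (∀ g n h, InOM g → InOM n → InOM h → g * h = 1 → BlkI n → BlkI (g * n * h)) ∧
    (InOM gZero ∧ ¬ BlkI gZero) ∧
    (∀ g, InOM g → (BlkI g ∨ BlkI (gZero * g))) := by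
  have hInOM1 : InOM 1 := ⟨by simp, by simp⟩
  have hgZ : InOM gZero := by
    refine ⟨?_, by decide⟩
    have h : gZero * gZero = 1 := by decide
    exact IsUnit.of_mul_eq_one _ (by rw [← Matrix.det_mul, h, Matrix.det_one])
  refine ⟨⟨hInOM1, by unfold BlkI; decide⟩, ?_, ?_, ?_, ⟨hgZ, by unfold BlkI; decide⟩, ?_⟩
  · -- closed under multiplication
    intro g h hg hh bg bh
    rw [blk_iff] at bg bh ⊢
    rw [mul_cast h hg 0 0 (by norm_num), mul_cast h hg 0 1 (by norm_num),
      mul_cast h hg 1 0 (by norm_num), mul_cast h hg 1 1 (by norm_num),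
      bg.1, bg.2.1, bg.2.2.1, bg.2.2.2, bh.1, bh.2.1, bh.2.2.1, bh.2.2.2]
    norm_num
  · -- closed under inverses
    intro g h hg hh hgh bg
    rw [blk_iff] at bg ⊢
    have e : ∀ i j : Fin 6, (i:ℕ) < 2 →
        (g i 0 : ZMod 2) * (h 0 j) + (g i 1 : ZMod 2) * (h 1 j)
          = (((1 : Matrix (Fin 6) (Fin 6) ℤ) i j : ℤ) : ZMod 2) := by
      intro i j hi; rw [← mul_cast h hg i j hi, hgh]
    have e00 := e 0 0 (by norm_num); have e01 := e 0 1 (by norm_num)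
    have e10 := e 1 0 (by norm_num); have e11 := e 1 1 (by norm_num)
    simp only [bg.1, bg.2.1, bg.2.2.1, bg.2.2.2] at e00 e01 e10 e11
    simp [Matrix.one_apply] at e00 e01 e10 e11
    exact ⟨e00, e01, e10, e11⟩
  · -- normality
    intro g n h hg hn hh hgh bn
    rw [blk_iff] at bn ⊢
    have key : ∀ i j : Fin 6, (i:ℕ) < 2 →
        (((g * n * h) i j : ℤ) : ZMod 2) = (((1 : Matrix (Fin 6) (Fin 6) ℤ) i j : ℤ) : ZMod 2) := by
      intro i j hi
      rw [mul_cast h (InOM_mul hg hn) i j hi, mul_cast n hg i 0 hi, mul_cast n hg i 1 hi,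
        bn.1, bn.2.1, bn.2.2.1, bn.2.2.2, ← hgh, mul_cast h hg i j hi]
      ring
    have e00 := key 0 0 (by norm_num); have e01 := key 0 1 (by norm_num)
    have e10 := key 1 0 (by norm_num); have e11 := key 1 1 (by norm_num)
    simp [Matrix.one_apply] at e00 e01 e10 e11
    exact ⟨e00, e01, e10, e11⟩
  · -- index 2
    intro g hg
    rcases (master g hg).1 with hc | hc
    · left; rw [blk_iff]; exact hc
    · right; rw [blk_iff]
      have e : ∀ j : Fin 6, (gZero * g) 0 j = g 1 j ∧ (gZero * g) 1 j = g 0 j := by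
        intro j
        constructor <;>
        · rw [Matrix.mul_apply, Fin.sum_univ_six]
          simp [gZero, show (5:Fin 6) = Fin.succ 4 from rfl, Matrix.cons_val_succ]
          try simp only [show (Fin.succ 4 : Fin 6) = 5 from rfl]
          try ring
      rw [(e 0).1, (e 1).1, (e 0).2, (e 1).2]
      exact ⟨hc.2.2.1, hc.2.2.2, hc.1, hc.2.1⟩
end

section
/- In the lattice M = ℤ⁶ with bilinear form Q = [[0,1],[1,0]] ⊕ [[0,2],[2,0]] ⊕ [[-4,2],[2,-4]], the orthogonal complement of the vector e₁ - e₂ is a rank-5 sublattice with an orthogonal basis consisting of the vectors e₁+e₂+e₃, 3e₁+3e₂-3e₄+e₅+2e₆, e₁+e₂+e₃-e₄, -e₁-e₂+e₄-e₆, -e₁-e₂+e₄-e₅-e₆, whose Gram matrix is diag(2, 6, -2, -2, -2); i.e., ⟨e₁-e₂⟩^⊥ ≅ ⟨2⟩ ⊕ ⟨6⟩ ⊕ ⟨-2⟩³. -/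
open Matrix

/-- The vector `e₁ - e₂`. -/
def wv : Fin 6 → ℤ := ![1,-1,0,0,0,0]

/-- The claimed orthogonal basis of `⟨e₁ - e₂⟩^⊥`. -/
def Bv : Fin 5 → (Fin 6 → ℤ) :=
  ![![1,1,1,0,0,0], ![3,3,0,-3,1,2], ![1,1,1,-1,0,0],
    ![-1,-1,0,1,0,-1], ![-1,-1,0,1,-1,-1]]

/-- The Gram matrix `⟨2⟩ ⊕ ⟨6⟩ ⊕ ⟨-2⟩³`. -/
def Gm : Matrix (Fin 5) (Fin 5) ℤ := Matrix.diagonal ![2,6,-2,-2,-2]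

lemma g1' {n} : (1 : Fin (n+2)) = Fin.succ 0 := rfl
lemma g2' {n} : (2 : Fin (n+3)) = Fin.succ (Fin.succ 0) := rfl
lemma g3' {n} : (3 : Fin (n+4)) = Fin.succ (Fin.succ (Fin.succ 0)) := rfl
lemma g4' {n} : (4 : Fin (n+5)) = Fin.succ (Fin.succ (Fin.succ (Fin.succ 0))) := rfl
lemma g5' {n} : (5 : Fin (n+6)) = Fin.succ (Fin.succ (Fin.succ (Fin.succ (Fin.succ 0)))) := rfl
lemma k1' {n} (h : 1 < n+2) : (⟨1, h⟩ : Fin (n+2)) = Fin.succ 0 := rfl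
lemma k2' {n} (h : 2 < n+3) : (⟨2, h⟩ : Fin (n+3)) = Fin.succ (Fin.succ 0) := rfl
lemma k3' {n} (h : 3 < n+4) : (⟨3, h⟩ : Fin (n+4)) = Fin.succ (Fin.succ (Fin.succ 0)) := rfl
lemma k4' {n} (h : 4 < n+5) : (⟨4, h⟩ : Fin (n+5)) = Fin.succ (Fin.succ (Fin.succ (Fin.succ 0))) := rfl
lemma k5' {n} (h : 5 < n+6) : (⟨5, h⟩ : Fin (n+6)) = Fin.succ (Fin.succ (Fin.succ (Fin.succ (Fin.succ 0)))) := rfl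

/-- The orthogonal complement of `e₁ - e₂` in `U ⊕ U(2) ⊕ A₂(2)` has the
orthogonal `ℤ`-basis `Bv` with Gram matrix `diag(2,6,-2,-2,-2)`, i.e.
`⟨e₁-e₂⟩^⊥ ≅ ⟨2⟩ ⊕ ⟨6⟩ ⊕ ⟨-2⟩³`. -/
theorem stmt19 :
    (∀ i : Fin 5, Bv i ⬝ᵥ Qi.mulVec wv = 0) ∧
    (∀ i j : Fin 5, Bv i ⬝ᵥ Qi.mulVec (Bv j) = Gm i j) ∧
    (∀ x : Fin 6 → ℤ, x ⬝ᵥ Qi.mulVec wv = 0 →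
      ∃! c : Fin 5 → ℤ, x = ∑ i : Fin 5, c i • Bv i) := by
  refine ⟨by decide, by intro i j; fin_cases i <;> fin_cases j <;> decide, ?_⟩
  intro x hx
  have hQw : Qi.mulVec wv = ![-1,1,0,0,0,0] := by decide
  rw [hQw] at hx
  have h01 : x 1 = x 0 := by
    simp only [dotProduct, Fin.sum_univ_six, g1', g2', g3', g4', g5',
      Matrix.cons_val_succ, Matrix.cons_val_zero, mul_zero, add_zero,
      mul_one, mul_neg_one] at hx
    simp only [g1']
    linarith
  simp only [g1'] at h01
  refine ⟨![x 0 + x 3, x 0 - x 2 - x 5, x 2 - x 0 - x 3,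
            x 0 - x 2 + x 4 - 2 * x 5, x 0 - x 2 - x 4 - x 5], ?_, ?_⟩
  · funext j
    simp only [Fin.sum_univ_five, Bv, Pi.add_apply, Pi.smul_apply, smul_eq_mul]
    fin_cases j <;>
      simp only [g1', g2', g3', g4', g5', k1', k2', k3', k4', k5',
        Matrix.cons_val_succ, Matrix.cons_val_zero, Fin.zero_eta] <;>
      linarith
  · intro c hc
    have h : ∀ j : Fin 6, x j = ∑ i : Fin 5, c i • Bv i j := fun j => by
      rw [hc]; simp
    have h0 := h 0
    have h2 := h 2
    have h3 := h 3
    have h4 := h 4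
    have h5 := h 5
    simp only [Fin.sum_univ_five, Bv, smul_eq_mul, g1', g2', g3', g4', g5',
      Matrix.cons_val_succ, Matrix.cons_val_zero, mul_zero, add_zero, zero_add,
      mul_one, mul_neg_one, mul_neg] at h0 h2 h3 h4 h5
    funext i
    fin_cases i <;>
      simp only [g1', g2', g3', g4', g5', k1', k2', k3', k4', k5',
        Matrix.cons_val_succ, Matrix.cons_val_zero, Fin.zero_eta] <;>
      linarith
end
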